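/- Let A be a copositive symmetric tensor of order 3 and dimension 3 with a_{111} = a_{222} = a_{333} = 1. Then a_{112} + a_{221} ≥ −2/3, a_{113} + a_{331} ≥ −2/3, a_{223} + a_{332} ≥ −2/3, and 2 a_{123} + a_{112} + a_{113} + a_{221} + a_{223} + a_{331} + a_{332} ≥ −1. -/

import Mathlib

open Finset

/-- `A x^m` for an `m`-order `n`-dimensional tensor `A`. -/
noncomputable def tpow {m n : ℕ} (A : (Fin m → Fin n) → ℝ) (x : Fin n → ℝ) : ℝ :=
  ∑ f : Fin m → Fin n, A f * ∏ k, x (f k)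

/-- `A` is symmetric: entries invariant under permutations of indices. -/
def SymT {m n : ℕ} (A : (Fin m → Fin n) → ℝ) : Prop :=
  ∀ (σ : Equiv.Perm (Fin m)) (f : Fin m → Fin n), A (f ∘ σ) = A f

/-- `A` is copositive. -/
def CoposT {m n : ℕ} (A : (Fin m → Fin n) → ℝ) : Prop :=
  ∀ x : Fin n → ℝ, (∀ i, 0 ≤ x i) → 0 ≤ tpow A x

/-- `A` is strictly copositive. -/
def StrictCoposT {m n : ℕ} (A : (Fin m → Fin n) → ℝ) : Prop :=
  ∀ x : Fin n → ℝ, (∀ i, 0 ≤ x i) → x ≠ 0 → 0 < tpow A x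

def triEquiv : Fin 3 × Fin 3 × Fin 3 ≃ (Fin 3 → Fin 3) where
  toFun p := ![p.1, p.2.1, p.2.2]
  invFun f := (f 0, f 1, f 2)
  left_inv := by decide
  right_inv := by decide

lemma tpow_expand (A : (Fin 3 → Fin 3) → ℝ) (x : Fin 3 → ℝ) :
    tpow A x = ∑ i : Fin 3, ∑ j : Fin 3, ∑ k : Fin 3,
      A ![i, j, k] * (x i * x j * x k) := by
  rw [tpow, ← Equiv.sum_comp triEquiv]
  rw [Fintype.sum_prod_type]
  congr 1; funext i
  rw [Fintype.sum_prod_type]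
  congr 1; funext j
  congr 1; funext k
  simp [triEquiv, Fin.prod_univ_three, mul_assoc]

lemma sym12 (A : (Fin 3 → Fin 3) → ℝ) (hA : SymT A) (i j k : Fin 3) :
    A ![j, i, k] = A ![i, j, k] := by
  have h := hA (Equiv.swap 0 1) ![i, j, k]
  have : (![i, j, k] ∘ (Equiv.swap (0:Fin 3) 1)) = ![j, i, k] := by
    funext l; fin_cases l <;> rfl
  rwa [this] at h

lemma sym23 (A : (Fin 3 → Fin 3) → ℝ) (hA : SymT A) (i j k : Fin 3) :
    A ![i, k, j] = A ![i, j, k] := by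
  have h := hA (Equiv.swap 1 2) ![i, j, k]
  have : (![i, j, k] ∘ (Equiv.swap (1:Fin 3) 2)) = ![i, k, j] := by
    funext l; fin_cases l <;> rfl
  rwa [this] at h

lemma sym13 (A : (Fin 3 → Fin 3) → ℝ) (hA : SymT A) (i j k : Fin 3) :
    A ![k, j, i] = A ![i, j, k] := by
  have h := hA (Equiv.swap 0 2) ![i, j, k]
  have : (![i, j, k] ∘ (Equiv.swap (0:Fin 3) 2)) = ![k, j, i] := by
    funext l; fin_cases l <;> rfl
  rwa [this] at h

theorem stmt17 (A : (Fin 3 → Fin 3) → ℝ) (hA : SymT A) (hc : CoposT A)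
    (h1 : A ![0, 0, 0] = 1) (h2 : A ![1, 1, 1] = 1) (h3 : A ![2, 2, 2] = 1) :
    A ![0, 0, 1] + A ![1, 1, 0] ≥ -(2 / 3) ∧
    A ![0, 0, 2] + A ![2, 2, 0] ≥ -(2 / 3) ∧
    A ![1, 1, 2] + A ![2, 2, 1] ≥ -(2 / 3) ∧
    2 * A ![0, 1, 2] + A ![0, 0, 1] + A ![0, 0, 2] + A ![1, 1, 0] +
      A ![1, 1, 2] + A ![2, 2, 0] + A ![2, 2, 1] ≥ -1 := by
  have e12 := sym12 A hA
  have e23 := sym23 A hA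
  have e13 := sym13 A hA
  have key : ∀ x : Fin 3 → ℝ, (∀ i, 0 ≤ x i) →
      0 ≤ ∑ i : Fin 3, ∑ j : Fin 3, ∑ k : Fin 3, A ![i, j, k] * (x i * x j * x k) := by
    intro x hx
    rw [← tpow_expand]; exact hc x hx
  have H1 := key ![1, 1, 0] (by intro i; fin_cases i <;> norm_num)
  have H2 := key ![1, 0, 1] (by intro i; fin_cases i <;> norm_num)
  have H3 := key ![0, 1, 1] (by intro i; fin_cases i <;> norm_num)
  have H4 := key ![1, 1, 1] (by intro i; fin_cases i <;> norm_num)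
  simp only [Fin.sum_univ_three] at H1 H2 H3 H4
  norm_num [Matrix.cons_val_zero, Matrix.cons_val_one, Matrix.cons_val_two, Matrix.tail_cons, Matrix.head_cons] at H1 H2 H3 H4
  simp only [e23 0 0 1, e13 0 0 1, e23 1 1 0, e13 1 1 0,
    e23 0 0 2, e13 0 0 2, e23 2 2 0, e13 2 2 0,
    e23 1 1 2, e13 1 1 2, e23 2 2 1, e13 2 2 1,
    e23 0 1 2, e12 0 1 2, e13 0 1 2, e12 2 1 0, e23 2 1 0,
    h1, h2, h3] at H1 H2 H3 H4
  refine ⟨by linarith, by linarith, by linarith, by linarith⟩
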